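/- Soundness of the SDP constraint for the (ρ̂, δ)-diamond norm: let ρ̂ and ρ_in be density matrices indexed by (m × n) × (m × n) with ‖ρ̂ − ρ_in‖₁ ≤ δ for a real number δ ≥ 0, and let ρ' = Tr₂ ρ̂ and ρ = Tr₂ ρ_in be their partial traces over the second tensor factor. Then the real number tr(ρ'·ρ) satisfies tr(ρ'·ρ) ≥ ‖ρ'‖_F · (‖ρ'‖_F − δ). -/

import Mathlib

open Matrix
open scoped ComplexOrder

/-- The trace norm of a complex square matrix: the trace of the positive
semidefinite square root of `Aᴴ * A`. -/
noncomputable def traceNorm {d : Type*} [Fintype d] [DecidableEq d] (A : Matrix d d ℂ) : ℝ :=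
  (((Matrix.posSemidef_conjTranspose_mul_self A).1.eigenvectorUnitary.1 *
      diagonal (((↑) : ℝ → ℂ) ∘ (√·) ∘ (Matrix.posSemidef_conjTranspose_mul_self A).1.eigenvalues) *
      (star (Matrix.posSemidef_conjTranspose_mul_self A).1.eigenvectorUnitary : Matrix d d ℂ)).trace).re

/-- The Frobenius norm of a complex matrix. -/
noncomputable def frobeniusNorm {d : Type*} [Fintype d] (A : Matrix d d ℂ) : ℝ :=
  Real.sqrt (∑ i, ∑ j, ‖A i j‖ ^ 2)

/-- A density matrix: positive semidefinite (hence Hermitian) with trace 1. -/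
def IsDensity {d : Type*} [Fintype d] (ρ : Matrix d d ℂ) : Prop :=
  ρ.PosSemidef ∧ ρ.trace = 1

/-- Partial trace over the second tensor factor. -/
noncomputable def ptrace2 {m n : Type*} [Fintype n] (M : Matrix (m × n) (m × n) ℂ) :
    Matrix m m ℂ :=
  Matrix.of fun i j => ∑ k, M (i, k) (j, k)

/- ---------- auxiliary lemmas ---------- -/

lemma quadform_bound {d : Type*} [Fintype d] (A : Matrix d d ℂ) (w : d → ℂ) :
    ‖star w ⬝ᵥ A *ᵥ w‖ ≤ frobeniusNorm A * ∑ i, ‖w i‖ ^ 2 := by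
  have hS : (0:ℝ) ≤ ∑ i, ‖w i‖ ^ 2 := Finset.sum_nonneg fun _ _ => by positivity
  have hF : (0:ℝ) ≤ ∑ i, ∑ j, ‖A i j‖ ^ 2 :=
    Finset.sum_nonneg fun _ _ => Finset.sum_nonneg fun _ _ => by positivity
  have step1 : ‖star w ⬝ᵥ A *ᵥ w‖ ≤ ∑ i, ‖w i‖ * ‖(A *ᵥ w) i‖ := by
    refine (norm_sum_le _ _).trans ?_
    refine Finset.sum_le_sum fun i _ => ?_
    simp [Pi.star_apply, norm_mul]
  have row : ∀ i, ‖(A *ᵥ w) i‖ ^ 2 ≤ (∑ j, ‖A i j‖ ^ 2) * ∑ j, ‖w j‖ ^ 2 := by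
    intro i
    have h1 : ‖(A *ᵥ w) i‖ ≤ ∑ j, ‖A i j‖ * ‖w j‖ := by
      refine (norm_sum_le _ _).trans ?_
      exact Finset.sum_le_sum fun j _ => by simp [norm_mul]
    calc ‖(A *ᵥ w) i‖ ^ 2 ≤ (∑ j, ‖A i j‖ * ‖w j‖) ^ 2 := by
            apply pow_le_pow_left₀ (norm_nonneg _) h1
      _ ≤ (∑ j, ‖A i j‖ ^ 2) * ∑ j, ‖w j‖ ^ 2 :=
            Finset.sum_mul_sq_le_sq_mul_sq _ _ _
  have step2 : ∑ i, ‖w i‖ * ‖(A *ᵥ w) i‖ ≤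
      Real.sqrt (∑ i, ‖w i‖ ^ 2) * Real.sqrt (∑ i, ‖(A *ᵥ w) i‖ ^ 2) :=
    Real.sum_mul_le_sqrt_mul_sqrt _ _ _
  have step3 : Real.sqrt (∑ i, ‖(A *ᵥ w) i‖ ^ 2) ≤
      Real.sqrt ((∑ i, ∑ j, ‖A i j‖ ^ 2) * ∑ j, ‖w j‖ ^ 2) := by
    apply Real.sqrt_le_sqrt
    calc ∑ i, ‖(A *ᵥ w) i‖ ^ 2 ≤ ∑ i, (∑ j, ‖A i j‖ ^ 2) * ∑ j, ‖w j‖ ^ 2 :=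
          Finset.sum_le_sum fun i _ => row i
      _ = (∑ i, ∑ j, ‖A i j‖ ^ 2) * ∑ j, ‖w j‖ ^ 2 := by rw [Finset.sum_mul]
  calc ‖star w ⬝ᵥ A *ᵥ w‖ ≤ ∑ i, ‖w i‖ * ‖(A *ᵥ w) i‖ := step1
    _ ≤ Real.sqrt (∑ i, ‖w i‖ ^ 2) * Real.sqrt (∑ i, ‖(A *ᵥ w) i‖ ^ 2) := step2
    _ ≤ Real.sqrt (∑ i, ‖w i‖ ^ 2) *
        Real.sqrt ((∑ i, ∑ j, ‖A i j‖ ^ 2) * ∑ j, ‖w j‖ ^ 2) :=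
          mul_le_mul_of_nonneg_left step3 (Real.sqrt_nonneg _)
    _ = frobeniusNorm A * ∑ i, ‖w i‖ ^ 2 := by
        rw [Real.sqrt_mul hF, frobeniusNorm]
        rw [← mul_assoc, mul_comm (Real.sqrt (∑ i, ‖w i‖ ^ 2)), mul_assoc,
          Real.mul_self_sqrt hS]

open scoped MatrixOrder in
lemma traceNorm_hermitian {d : Type*} [Fintype d] [DecidableEq d] {B : Matrix d d ℂ}
    (hB : B.IsHermitian) : traceNorm B = ∑ i, |hB.eigenvalues i| := by
  set U : Matrix d d ℂ := (hB.eigenvectorUnitary : Matrix d d ℂ) with hU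
  have hUU : Uᴴ * U = 1 := by
    rw [← Matrix.star_eq_conjTranspose]
    exact Unitary.coe_star_mul_self hB.eigenvectorUnitary
  set S : Matrix d d ℂ :=
    U * diagonal (fun i => Complex.ofReal |hB.eigenvalues i|) * Uᴴ with hSdef
  have hS : S.PosSemidef := by
    apply Matrix.PosSemidef.mul_mul_conjTranspose_same
    refine Matrix.posSemidef_diagonal_iff.mpr fun i => ?_
    rw [Complex.zero_le_real]
    exact abs_nonneg _
  have hsq : S ^ 2 = Bᴴ * B := by
    have hB2 : B = U * diagonal (RCLike.ofReal ∘ hB.eigenvalues) * Uᴴ := by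
      have := hB.spectral_theorem
      rwa [Unitary.conjStarAlgAut_apply, Matrix.star_eq_conjTranspose] at this
    rw [hB.eq]
    conv_rhs => rw [hB2]
    rw [pow_two, hSdef]
    have key : ∀ f g : d → ℂ,
        (U * diagonal f * Uᴴ) * (U * diagonal g * Uᴴ) = U * diagonal (fun i => f i * g i) * Uᴴ := by
      intro f g
      calc (U * diagonal f * Uᴴ) * (U * diagonal g * Uᴴ)
          = U * (diagonal f * ((Uᴴ * U) * (diagonal g * Uᴴ))) := by
            simp only [Matrix.mul_assoc]
        _ = U * diagonal (fun i => f i * g i) * Uᴴ := by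
            rw [hUU, Matrix.one_mul, ← Matrix.mul_assoc, ← Matrix.mul_assoc,
              Matrix.mul_assoc U, diagonal_mul_diagonal]
    rw [key, key]
    congr 2
    refine congrArg Matrix.diagonal (funext fun i => ?_)
    show (Complex.ofReal |hB.eigenvalues i|) * (Complex.ofReal |hB.eigenvalues i|)
        = (Complex.ofReal (hB.eigenvalues i)) * (Complex.ofReal (hB.eigenvalues i))
    rw [← Complex.ofReal_mul, ← Complex.ofReal_mul, abs_mul_abs_self]
  have hSeq : S = (Matrix.posSemidef_conjTranspose_mul_self B).1.cfc Real.sqrt := by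
    rw [← (Matrix.posSemidef_conjTranspose_mul_self B).1.cfc_eq, ← cfcₙ_eq_cfc (f := Real.sqrt),
      ← CFC.sqrt_eq_real_sqrt _ (Matrix.posSemidef_conjTranspose_mul_self B).nonneg]
    exact (CFC.sqrt_unique (by rw [← pow_two]; exact hsq) hS.nonneg).symm
  rw [show traceNorm B = (((Matrix.posSemidef_conjTranspose_mul_self B).1.cfc Real.sqrt).trace).re
    from rfl, ← hSeq, hSdef]
  rw [Matrix.trace_mul_comm, ← Matrix.mul_assoc, hUU, Matrix.one_mul, Matrix.trace_diagonal]
  rw [Complex.re_sum]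
  simp

lemma entry_spectral {d : Type*} [Fintype d] [DecidableEq d] {Δ : Matrix d d ℂ}
    (hΔ : Δ.IsHermitian) (p q : d) :
    Δ p q = ∑ a, (RCLike.ofReal (hΔ.eigenvalues a) : ℂ) *
      ((hΔ.eigenvectorUnitary : Matrix d d ℂ) p a *
        star ((hΔ.eigenvectorUnitary : Matrix d d ℂ) q a)) := by
  conv_lhs => rw [hΔ.spectral_theorem, Unitary.conjStarAlgAut_apply]
  simp only [Matrix.mul_apply, Matrix.diagonal_apply, Matrix.star_apply, ite_mul, zero_mul,
    mul_ite, mul_zero, Finset.sum_ite_eq, Finset.sum_ite_eq', Finset.mem_univ, if_true,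
    Function.comp_apply]
  exact Finset.sum_congr rfl fun a _ => by ring

lemma trace_mul_ptrace2 {m n : Type*} [Fintype m] [DecidableEq m] [Fintype n] [DecidableEq n]
    (A : Matrix m m ℂ) (Δ : Matrix (m × n) (m × n) ℂ) (hΔ : Δ.IsHermitian) :
    (A * ptrace2 Δ).trace = ∑ a, (RCLike.ofReal (hΔ.eigenvalues a) : ℂ) *
      ∑ k, star (fun i => (hΔ.eigenvectorUnitary : Matrix (m × n) (m × n) ℂ) (i, k) a) ⬝ᵥ
        A *ᵥ (fun i => (hΔ.eigenvectorUnitary : Matrix (m × n) (m × n) ℂ) (i, k) a) := by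
  simp only [Matrix.trace, Matrix.diag_apply, Matrix.mul_apply, ptrace2, Matrix.of_apply,
    entry_spectral hΔ, dotProduct, Matrix.mulVec, Pi.star_apply, Finset.mul_sum,
    Finset.sum_mul]
  conv_lhs => enter [2, i, 2, j]; rw [Finset.sum_comm]
  conv_lhs => enter [2, i]; rw [Finset.sum_comm]
  conv_lhs => rw [Finset.sum_comm]
  conv_lhs => enter [2, a, 2, i]; rw [Finset.sum_comm]
  conv_lhs => enter [2, a]; rw [Finset.sum_comm]
  refine Finset.sum_congr rfl fun a _ => Finset.sum_congr rfl fun k _ =>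
    Finset.sum_congr rfl fun i _ => Finset.sum_congr rfl fun j _ => by ring

lemma trace_self_mul_re {d : Type*} [Fintype d] {A : Matrix d d ℂ} (hA : A.IsHermitian) :
    ((A * A).trace).re = ∑ i, ∑ j, ‖A i j‖ ^ 2 := by
  have key : ∀ i j, A j i = star (A i j) := fun i j => (hA.apply j i).symm ▸ rfl
  simp only [Matrix.trace, Matrix.diag_apply, Matrix.mul_apply]
  rw [Complex.re_sum]
  refine Finset.sum_congr rfl fun i _ => ?_
  rw [Complex.re_sum]
  refine Finset.sum_congr rfl fun j _ => ?_
  rw [key i j, Complex.mul_re]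
  simp [Complex.sq_norm, Complex.normSq_apply]

lemma ptrace2_isHermitian {m n : Type*} [Fintype n] {M : Matrix (m × n) (m × n) ℂ}
    (hM : M.IsHermitian) : (ptrace2 M).IsHermitian := by
  ext i j
  simp only [Matrix.conjTranspose_apply, ptrace2, Matrix.of_apply, star_sum]
  exact Finset.sum_congr rfl fun k _ => hM.apply (i, k) (j, k)

/-- Soundness of the SDP constraint for the `(ρ̂, δ)`-diamond norm. -/
theorem sdp_constraint_sound {m n : Type*} [Fintype m] [DecidableEq m]
    [Fintype n] [DecidableEq n]
    (ρhat ρin : Matrix (m × n) (m × n) ℂ)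
    (hρhat : IsDensity ρhat) (hρin : IsDensity ρin)
    (δ : ℝ) (hδ : 0 ≤ δ) (h : traceNorm (ρhat - ρin) ≤ δ) :
    ((ptrace2 ρhat * ptrace2 ρin).trace).re ≥
      frobeniusNorm (ptrace2 ρhat) * (frobeniusNorm (ptrace2 ρhat) - δ) := by
  set ρ' := ptrace2 ρhat with hρ'def
  set Δ : Matrix (m × n) (m × n) ℂ := ρhat - ρin with hΔdef
  have hΔh : Δ.IsHermitian := hρhat.1.1.sub hρin.1.1
  set U : Matrix (m × n) (m × n) ℂ := (hΔh.eigenvectorUnitary : Matrix (m × n) (m × n) ℂ)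
    with hUdef
  set F := frobeniusNorm ρ' with hFdef
  have hρ'h : ρ'.IsHermitian := ptrace2_isHermitian hρhat.1.1
  have hFnn : 0 ≤ F := Real.sqrt_nonneg _
  -- split the trace
  have hsplit : ptrace2 ρin = ρ' - ptrace2 Δ := by
    ext i j
    simp [ptrace2, hρ'def, hΔdef, Matrix.sub_apply, Finset.sum_sub_distrib]
  have htr : ((ρ' * ptrace2 ρin).trace).re
      = ((ρ' * ρ').trace).re - ((ρ' * ptrace2 Δ).trace).re := by
    rw [hsplit, Matrix.mul_sub, Matrix.trace_sub, Complex.sub_re]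
  -- Frobenius square
  have hnn : (0:ℝ) ≤ ∑ i, ∑ j, ‖ρ' i j‖ ^ 2 :=
    Finset.sum_nonneg fun _ _ => Finset.sum_nonneg fun _ _ => by positivity
  have hFF : ((ρ' * ρ').trace).re = F * F := by
    rw [trace_self_mul_re hρ'h, hFdef, frobeniusNorm, Real.mul_self_sqrt hnn]
  -- columns of U are unit vectors
  have hcol : ∀ a, ∑ k, ∑ i, ‖U (i, k) a‖ ^ 2 = 1 := by
    intro a
    have hUU : Uᴴ * U = 1 := by
      rw [← Matrix.star_eq_conjTranspose]
      exact Unitary.coe_star_mul_self hΔh.eigenvectorUnitary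
    have h2 : (Uᴴ * U) a a = 1 := by rw [hUU]; simp
    have h3 : ∑ x : m × n, (star (U x a) * U x a).re = 1 := by
      have := congrArg Complex.re h2
      rw [Matrix.mul_apply] at this
      rw [← Complex.re_sum]
      simpa [Matrix.conjTranspose_apply] using this
    have h4 : ∑ x : m × n, ‖U x a‖ ^ 2 = 1 := by
      rw [← h3]
      refine Finset.sum_congr rfl fun x _ => ?_
      rw [Complex.mul_re]
      simp [Complex.sq_norm, Complex.normSq_apply]
    rw [← h4, Fintype.sum_prod_type, Finset.sum_comm]
  -- perturbation bound
  have hq : ∀ a : m × n,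
      |(∑ k, star (fun i => U (i, k) a) ⬝ᵥ ρ' *ᵥ (fun i => U (i, k) a)).re| ≤ F := by
    intro a
    calc |(∑ k, star (fun i => U (i, k) a) ⬝ᵥ ρ' *ᵥ (fun i => U (i, k) a)).re|
        ≤ ‖∑ k, star (fun i => U (i, k) a) ⬝ᵥ ρ' *ᵥ (fun i => U (i, k) a)‖ :=
          Complex.abs_re_le_norm _
      _ ≤ ∑ k, ‖star (fun i => U (i, k) a) ⬝ᵥ ρ' *ᵥ (fun i => U (i, k) a)‖ :=
          norm_sum_le _ _
      _ ≤ ∑ k, F * ∑ i, ‖U (i, k) a‖ ^ 2 :=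
          Finset.sum_le_sum fun k _ => quadform_bound ρ' _
      _ = F * ∑ k, ∑ i, ‖U (i, k) a‖ ^ 2 := by rw [Finset.mul_sum]
      _ = F := by rw [hcol a, mul_one]
  have hpert : ((ρ' * ptrace2 Δ).trace).re ≤ δ * F := by
    have e1 : ((ρ' * ptrace2 Δ).trace).re = ∑ a, hΔh.eigenvalues a *
        (∑ k, star (fun i => U (i, k) a) ⬝ᵥ ρ' *ᵥ (fun i => U (i, k) a)).re := by
      rw [trace_mul_ptrace2 ρ' Δ hΔh, Complex.re_sum]
      refine Finset.sum_congr rfl fun a _ => ?_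
      rw [show (RCLike.ofReal (hΔh.eigenvalues a) : ℂ)
          = Complex.ofReal (hΔh.eigenvalues a) from rfl]
      simp only [Complex.mul_re, Complex.ofReal_re, Complex.ofReal_im, zero_mul, sub_zero]
      rfl
    rw [e1]
    calc ∑ a, hΔh.eigenvalues a *
          (∑ k, star (fun i => U (i, k) a) ⬝ᵥ ρ' *ᵥ (fun i => U (i, k) a)).re
        ≤ ∑ a, |hΔh.eigenvalues a| * F := by
          refine Finset.sum_le_sum fun a _ => ?_
          calc hΔh.eigenvalues a * (∑ k, star (fun i => U (i, k) a) ⬝ᵥ ρ' *ᵥ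
                (fun i => U (i, k) a)).re
              ≤ |hΔh.eigenvalues a * (∑ k, star (fun i => U (i, k) a) ⬝ᵥ ρ' *ᵥ
                (fun i => U (i, k) a)).re| := le_abs_self _
            _ = |hΔh.eigenvalues a| * |(∑ k, star (fun i => U (i, k) a) ⬝ᵥ ρ' *ᵥ
                (fun i => U (i, k) a)).re| := abs_mul _ _
            _ ≤ |hΔh.eigenvalues a| * F :=
                mul_le_mul_of_nonneg_left (hq a) (abs_nonneg _)
      _ = (∑ a, |hΔh.eigenvalues a|) * F := by rw [Finset.sum_mul]
      _ = traceNorm Δ * F := by rw [traceNorm_hermitian hΔh]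
      _ ≤ δ * F := mul_le_mul_of_nonneg_right h hFnn
  -- conclude
  have : ((ρ' * ptrace2 ρin).trace).re ≥ F * F - δ * F := by
    rw [htr, hFF]
    linarith
  calc ((ρ' * ptrace2 ρin).trace).re ≥ F * F - δ * F := this
    _ = F * (F - δ) := by ring
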